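/- arXiv:1610.07415 — 2 statements merged into one kernel-verified Lean document; each statement's English description precedes it below -/
import Mathlib

section
/- (High-temperature regime.) If β·γ_s < 2, then the variational functional F is strictly decreasing on (0,∞); consequently r = 0 is the unique maximizer of F over [0,∞). In particular, for every fixed choice of the remaining parameters there exists β_0 > 0 such that for all β ∈ (0, β_0) the unique maximizer is r_β = 0. -/
open Real Filter

/-- `g_{r,x} := sqrt((x + λ_s − μ_s)² + γ_s²·r)`. -/
noncomputable def gg (gams lams mus r x : ℝ) : ℝ :=
  Real.sqrt ((x + lams - mus) ^ 2 + gams ^ 2 * r)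

/-- The function `f` from Theorem 1 of the paper. Parameters:
`beta` = β, `gams` = γ_s, `lams` = λ_s, `lamf` = λ_f, `lam` = λ,
`mus` = μ_s, `muf` = μ_f, `hs` = h_s, `hf` = h_f, `eta` = η. -/
noncomputable def ff (beta gams lams lamf lam mus muf hs hf eta r : ℝ) : ℝ :=
  (Real.exp (-(beta * muf)) + Real.exp (-(beta * (4 * lam + 2 * lamf - muf))))
      * Real.cosh (beta * hs)
    + Real.exp (-(beta * (2 * lam - hs))) * Real.cosh (beta * (eta + hf))
    + Real.exp (-(beta * (2 * lam + hs))) * Real.cosh (beta * (eta - hf))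
    + Real.exp (-(beta * (lams + muf))) * Real.cosh (beta * gg gams lams mus r 0)
    + Real.exp (-(beta * (4 * lam + lams + 2 * lamf - muf)))
      * Real.cosh (beta * gg gams lams mus r (4 * lam))
    + 2 * Real.exp (-(beta * (2 * lam + lams))) * Real.cosh (beta * hf)
      * Real.cosh (beta * gg gams lams mus r (2 * lam))

/-- The variational functional `F(r) := −γ_s·r + β⁻¹·ln f(r)`. -/
noncomputable def FF (beta gams lams lamf lam mus muf hs hf eta r : ℝ) : ℝ :=
  -(gams * r) + beta⁻¹ * Real.log (ff beta gams lams lamf lam mus muf hs hf eta r)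

lemma my_sinh_le {x : ℝ} (hx : 0 ≤ x) : Real.sinh x ≤ x * Real.cosh x := by
  have h : MonotoneOn (fun t : ℝ => t * Real.cosh t - Real.sinh t) (Set.Ici 0) := by
    have hd : ∀ t : ℝ, HasDerivAt (fun t : ℝ => t * Real.cosh t - Real.sinh t)
        (1 * Real.cosh t + t * Real.sinh t - Real.cosh t) t := by
      intro t
      have := ((hasDerivAt_id t).mul (Real.hasDerivAt_cosh t)).sub (Real.hasDerivAt_sinh t)
      exact this
    apply monotoneOn_of_deriv_nonneg (convex_Ici 0)
    · fun_prop
    · intro t _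
      exact (hd t).differentiableAt.differentiableWithinAt
    · intro t ht
      rw [interior_Ici] at ht
      rw [(hd t).deriv]
      have h1 : 0 ≤ Real.sinh t := Real.sinh_nonneg_iff.mpr (le_of_lt ht)
      nlinarith [Set.mem_Ioi.mp ht]
  have h0 := h Set.self_mem_Ici (Set.mem_Ici.mpr hx) hx
  simp at h0
  linarith

lemma my_cosh_le {y x : ℝ} (hy : 0 ≤ y) (hyx : y ≤ x) :
    Real.cosh x ≤ Real.cosh y * Real.exp ((x ^ 2 - y ^ 2) / 2) := by
  have h : AntitoneOn (fun t : ℝ => Real.log (Real.cosh t) - t ^ 2 / 2) (Set.Ici 0) := by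
    have hd : ∀ t : ℝ, HasDerivAt (fun t : ℝ => Real.log (Real.cosh t) - t ^ 2 / 2)
        (Real.sinh t / Real.cosh t - 2 * t ^ 1 / 2) t := by
      intro t
      exact ((Real.hasDerivAt_cosh t).log (Real.cosh_pos t).ne').sub
        ((hasDerivAt_pow 2 t).div_const 2)
    apply antitoneOn_of_deriv_nonpos (convex_Ici 0)
    · fun_prop (disch := intros; first | exact (Real.cosh_pos _).ne' | norm_num)
    · intro t _
      exact (hd t).differentiableAt.differentiableWithinAt
    · intro t ht
      rw [interior_Ici] at ht
      rw [(hd t).deriv]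
      have h1 : Real.sinh t ≤ t * Real.cosh t := my_sinh_le (le_of_lt ht)
      have h2 : Real.sinh t / Real.cosh t ≤ t :=
        (div_le_iff₀ (Real.cosh_pos t)).mpr h1
      simp only [pow_one]
      linarith
  have h0 := h (Set.mem_Ici.mpr hy) (Set.mem_Ici.mpr (hy.trans hyx)) hyx
  simp only at h0
  have hlog : Real.log (Real.cosh x) ≤ Real.log (Real.cosh y) + (x ^ 2 - y ^ 2) / 2 := by
    linarith
  calc Real.cosh x = Real.exp (Real.log (Real.cosh x)) := (Real.exp_log (Real.cosh_pos _)).symm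
    _ ≤ Real.exp (Real.log (Real.cosh y) + (x ^ 2 - y ^ 2) / 2) := Real.exp_le_exp.mpr hlog
    _ = Real.cosh y * Real.exp ((x ^ 2 - y ^ 2) / 2) := by
        rw [Real.exp_add, Real.exp_log (Real.cosh_pos _)]

lemma gg_mono (gams lams mus x : ℝ) {r1 r2 : ℝ} (h12 : r1 ≤ r2) :
    gg gams lams mus r1 x ≤ gg gams lams mus r2 x := by
  apply Real.sqrt_le_sqrt
  nlinarith [sq_nonneg gams]

lemma cosh_gg_le (gams lams mus x : ℝ) {beta r1 r2 : ℝ} (hbeta : 0 ≤ beta)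
    (h1 : 0 ≤ r1) (h12 : r1 ≤ r2) :
    Real.cosh (beta * gg gams lams mus r2 x) ≤
      Real.cosh (beta * gg gams lams mus r1 x) *
        Real.exp (beta ^ 2 * gams ^ 2 * (r2 - r1) / 2) := by
  have h2 : 0 ≤ r2 := h1.trans h12
  have key := my_cosh_le (y := beta * gg gams lams mus r1 x)
    (x := beta * gg gams lams mus r2 x)
    (mul_nonneg hbeta (Real.sqrt_nonneg _))
    (mul_le_mul_of_nonneg_left (gg_mono gams lams mus x h12) hbeta)
  have hsq : ((beta * gg gams lams mus r2 x) ^ 2 - (beta * gg gams lams mus r1 x) ^ 2) / 2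
      = beta ^ 2 * gams ^ 2 * (r2 - r1) / 2 := by
    rw [mul_pow, mul_pow, gg, gg, Real.sq_sqrt (by positivity), Real.sq_sqrt (by positivity)]
    ring
  rwa [hsq] at key

lemma ff_pos (beta gams lams lamf lam mus muf hs hf eta r : ℝ) :
    0 < ff beta gams lams lamf lam mus muf hs hf eta r := by
  unfold ff
  positivity

lemma ff_le (gams lams lamf lam mus muf hs hf eta : ℝ) {beta r1 r2 : ℝ}
    (hbeta : 0 ≤ beta) (h1 : 0 ≤ r1) (h12 : r1 ≤ r2) :
    ff beta gams lams lamf lam mus muf hs hf eta r2 ≤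
      ff beta gams lams lamf lam mus muf hs hf eta r1 *
        Real.exp (beta ^ 2 * gams ^ 2 * (r2 - r1) / 2) := by
  set E := Real.exp (beta ^ 2 * gams ^ 2 * (r2 - r1) / 2) with hE
  have hΔ : 0 ≤ r2 - r1 := sub_nonneg.mpr h12
  have hE1 : 1 ≤ E := Real.one_le_exp (by positivity)
  unfold ff
  rw [show ∀ a b c d e f g : ℝ, (a + b + c + d + e + f) * g
    = a * g + b * g + c * g + d * g + e * g + f * g from fun a b c d e f g => by ring]
  refine add_le_add (add_le_add (add_le_add (add_le_add (add_le_add ?_ ?_) ?_) ?_) ?_) ?_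
  · exact le_mul_of_one_le_right (by positivity) hE1
  · exact le_mul_of_one_le_right (by positivity) hE1
  · exact le_mul_of_one_le_right (by positivity) hE1
  · rw [mul_assoc]
    exact mul_le_mul_of_nonneg_left (cosh_gg_le gams lams mus 0 hbeta h1 h12)
      (Real.exp_pos _).le
  · rw [mul_assoc]
    exact mul_le_mul_of_nonneg_left (cosh_gg_le gams lams mus (4 * lam) hbeta h1 h12)
      (Real.exp_pos _).le
  · have h := mul_le_mul_of_nonneg_left (cosh_gg_le gams lams mus (2 * lam) hbeta h1 h12)
      (show (0:ℝ) ≤ 2 * Real.exp (-(beta * (2 * lam + lams))) * Real.cosh (beta * hf) by positivity)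
    nlinarith [h]

lemma FF_lt (gams lams lamf lam mus muf hs hf eta : ℝ) (hgams : 0 < gams)
    {beta r1 r2 : ℝ} (hbeta : 0 < beta) (hbg : beta * gams < 2)
    (h1 : 0 ≤ r1) (h12 : r1 < r2) :
    FF beta gams lams lamf lam mus muf hs hf eta r2 <
      FF beta gams lams lamf lam mus muf hs hf eta r1 := by
  have hf1 := ff_pos beta gams lams lamf lam mus muf hs hf eta r1
  have hf2 := ff_pos beta gams lams lamf lam mus muf hs hf eta r2
  have hb := ff_le gams lams lamf lam mus muf hs hf eta hbeta.le h1 h12.le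
  have hlog : Real.log (ff beta gams lams lamf lam mus muf hs hf eta r2) ≤
      Real.log (ff beta gams lams lamf lam mus muf hs hf eta r1)
        + beta ^ 2 * gams ^ 2 * (r2 - r1) / 2 := by
    calc Real.log (ff beta gams lams lamf lam mus muf hs hf eta r2)
        ≤ Real.log (ff beta gams lams lamf lam mus muf hs hf eta r1 *
            Real.exp (beta ^ 2 * gams ^ 2 * (r2 - r1) / 2)) :=
          Real.log_le_log hf2 hb
      _ = _ := by rw [Real.log_mul hf1.ne' (Real.exp_ne_zero _), Real.log_exp]
  have h3 := mul_le_mul_of_nonneg_left hlog (inv_nonneg.mpr hbeta.le)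
  rw [mul_add] at h3
  have key : beta⁻¹ * (beta ^ 2 * gams ^ 2 * (r2 - r1) / 2) < gams * (r2 - r1) := by
    have heq : beta⁻¹ * (beta ^ 2 * gams ^ 2 * (r2 - r1) / 2)
        = beta * gams ^ 2 * (r2 - r1) / 2 := by
      field_simp
    rw [heq]
    nlinarith [mul_pos (mul_pos hgams (sub_pos.mpr h12)) (sub_pos.mpr hbg)]
  unfold FF
  linarith

/-- high-temperature regime: if `β·γ_s < 2` then `F` is strictly
decreasing on `(0,∞)`, so `r = 0` is the unique maximizer over `[0,∞)`; in
particular, for fixed remaining parameters there is `β₀ > 0` such that for all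
`β ∈ (0, β₀)` the unique maximizer is `0`. -/
theorem high_temperature_unique_maximizer (gams lams lamf lam mus muf hs hf eta : ℝ)
    (hgams : 0 < gams) (hlams : 0 ≤ lams) (hlamf : 0 ≤ lamf) (hlam : 0 ≤ lam) :
    (∀ beta : ℝ, 0 < beta → beta * gams < 2 →
      StrictAntiOn (fun r => FF beta gams lams lamf lam mus muf hs hf eta r) (Set.Ioi (0 : ℝ)) ∧
      (∀ r' : ℝ, 0 ≤ r' → FF beta gams lams lamf lam mus muf hs hf eta r' ≤ FF beta gams lams lamf lam mus muf hs hf eta 0) ∧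
      (∀ rb : ℝ, 0 ≤ rb →
        (∀ r' : ℝ, 0 ≤ r' → FF beta gams lams lamf lam mus muf hs hf eta r' ≤ FF beta gams lams lamf lam mus muf hs hf eta rb) → rb = 0)) ∧
    (∃ beta0 : ℝ, 0 < beta0 ∧ ∀ beta : ℝ, 0 < beta → beta < beta0 →
      (∀ r' : ℝ, 0 ≤ r' → FF beta gams lams lamf lam mus muf hs hf eta r' ≤ FF beta gams lams lamf lam mus muf hs hf eta 0) ∧
      (∀ rb : ℝ, 0 ≤ rb →
        (∀ r' : ℝ, 0 ≤ r' → FF beta gams lams lamf lam mus muf hs hf eta r' ≤ FF beta gams lams lamf lam mus muf hs hf eta rb) → rb = 0)) := by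
  have main : ∀ beta : ℝ, 0 < beta → beta * gams < 2 →
      StrictAntiOn (fun r => FF beta gams lams lamf lam mus muf hs hf eta r) (Set.Ioi (0 : ℝ)) ∧
      (∀ r' : ℝ, 0 ≤ r' → FF beta gams lams lamf lam mus muf hs hf eta r' ≤
        FF beta gams lams lamf lam mus muf hs hf eta 0) ∧
      (∀ rb : ℝ, 0 ≤ rb →
        (∀ r' : ℝ, 0 ≤ r' → FF beta gams lams lamf lam mus muf hs hf eta r' ≤
          FF beta gams lams lamf lam mus muf hs hf eta rb) → rb = 0) := by
    intro beta hbeta hbg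
    have hlt : ∀ {r1 r2 : ℝ}, 0 ≤ r1 → r1 < r2 →
        FF beta gams lams lamf lam mus muf hs hf eta r2 <
          FF beta gams lams lamf lam mus muf hs hf eta r1 :=
      fun h1 h12 => FF_lt gams lams lamf lam mus muf hs hf eta hgams hbeta hbg h1 h12
    refine ⟨fun a ha b hb hab => hlt (le_of_lt ha) hab, ?_, ?_⟩
    · intro r' hr'
      rcases eq_or_lt_of_le hr' with h | h
      · rw [← h]
      · exact (hlt le_rfl h).le
    · intro rb hrb hmax
      by_contra hne
      have hpos : 0 < rb := lt_of_le_of_ne hrb (Ne.symm hne)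
      have h1 := hlt le_rfl hpos
      have h2 := hmax 0 le_rfl
      linarith
  refine ⟨main, 2 / gams, by positivity, fun beta hbeta hlt => ?_⟩
  have hbg : beta * gams < 2 := by
    rw [lt_div_iff₀ hgams] at hlt
    linarith
  exact ⟨(main beta hbeta hbg).2.1, (main beta hbeta hbg).2.2⟩
end

section
/- (Density of the non-superconducting band.) Suppose that at the given parameter values the variational functional F has a unique maximizer r_β over [0,∞). Then the map μ ↦ p(μ), obtained by letting μ_f = μ vary with all other parameters held fixed, is differentiable at μ = μ_f, and its derivative there equals d^{(f)} := 1 + f(r_β)^{−1}·[ (exp(−β·(4λ + 2λ_f − μ_f)) − exp(−β·μ_f))·cosh(β·h_s) + exp(−β·(λ_s + 4λ + 2λ_f − μ_f))·cosh(β·g_{r_β,4λ}) − exp(−β·(λ_s + μ_f))·cosh(β·g_{r_β,0}) ]. -/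
open Real Filter

/-- The grand-canonical pressure `p = β⁻¹ ln 2 + μ_s + μ_f + sup_{r ≥ 0} F(r)`. -/
noncomputable def pp (beta gams lams lamf lam mus muf hs hf eta : ℝ) : ℝ :=
  beta⁻¹ * Real.log 2 + mus + muf +
    sSup ((fun r => FF beta gams lams lamf lam mus muf hs hf eta r) '' Set.Ici 0)

/-- derivative of ff in muf, divided by beta -/
noncomputable def dff (beta gams lams lamf lam mus muf hs hf eta r : ℝ) : ℝ :=
  (Real.exp (-(beta * (4 * lam + 2 * lamf - muf))) - Real.exp (-(beta * muf)))
      * Real.cosh (beta * hs)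
    + Real.exp (-(beta * (lams + 4 * lam + 2 * lamf - muf)))
      * Real.cosh (beta * gg gams lams mus r (4 * lam))
    - Real.exp (-(beta * (lams + muf))) * Real.cosh (beta * gg gams lams mus r 0)

noncomputable def psi (beta gams lams lamf lam mus muf hs hf eta r : ℝ) : ℝ :=
  (ff beta gams lams lamf lam mus muf hs hf eta r)⁻¹
    * dff beta gams lams lamf lam mus muf hs hf eta r

lemma ff_hasDerivAt (beta gams lams lamf lam mus hs hf eta r muf : ℝ) :
    HasDerivAt (fun mu => ff beta gams lams lamf lam mus mu hs hf eta r)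
      (beta * dff beta gams lams lamf lam mus muf hs hf eta r) muf := by
  have e1 : HasDerivAt (fun mu : ℝ => Real.exp (-(beta * mu)))
      (Real.exp (-(beta * muf)) * (-beta)) muf := by
    have := (((hasDerivAt_id muf).const_mul beta).neg).exp
    simpa using this
  have e2 : HasDerivAt (fun mu : ℝ => Real.exp (-(beta * (4 * lam + 2 * lamf - mu))))
      (Real.exp (-(beta * (4 * lam + 2 * lamf - muf))) * beta) muf := by
    have h : HasDerivAt (fun mu : ℝ => -(beta * (4 * lam + 2 * lamf - mu))) beta muf := by
      have := (((hasDerivAt_id muf).const_sub (4 * lam + 2 * lamf)).const_mul beta).neg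
      simpa [Pi.neg_def] using this
    simpa using h.exp
  have e4 : HasDerivAt (fun mu : ℝ => Real.exp (-(beta * (lams + mu))))
      (Real.exp (-(beta * (lams + muf))) * (-beta)) muf := by
    have h : HasDerivAt (fun mu : ℝ => -(beta * (lams + mu))) (-beta) muf := by
      have := (((hasDerivAt_id muf).const_add lams).const_mul beta).neg
      simpa [Pi.neg_def] using this
    simpa using h.exp
  have e5 : HasDerivAt (fun mu : ℝ => Real.exp (-(beta * (4 * lam + lams + 2 * lamf - mu))))
      (Real.exp (-(beta * (4 * lam + lams + 2 * lamf - muf))) * beta) muf := by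
    have h : HasDerivAt (fun mu : ℝ => -(beta * (4 * lam + lams + 2 * lamf - mu))) beta muf := by
      have := (((hasDerivAt_id muf).const_sub (4 * lam + lams + 2 * lamf)).const_mul beta).neg
      simpa [Pi.neg_def] using this
    simpa using h.exp
  have ha := (e1.add e2).mul_const (Real.cosh (beta * hs))
  have hb := ha.add_const
      (Real.exp (-(beta * (2 * lam - hs))) * Real.cosh (beta * (eta + hf)))
  have hc := hb.add_const
      (Real.exp (-(beta * (2 * lam + hs))) * Real.cosh (beta * (eta - hf)))
  have hd := hc.add (e4.mul_const (Real.cosh (beta * gg gams lams mus r 0)))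
  have h := hd.add (e5.mul_const (Real.cosh (beta * gg gams lams mus r (4 * lam))))
  have h2 := h.add_const
      (2 * Real.exp (-(beta * (2 * lam + lams))) * Real.cosh (beta * hf)
        * Real.cosh (beta * gg gams lams mus r (2 * lam)))
  have h3 : HasDerivAt (fun mu => ff beta gams lams lamf lam mus mu hs hf eta r) _ muf := h2
  convert h3 using 1
  unfold dff
  ring_nf

lemma FF_hasDerivAt (beta gams lams lamf lam mus hs hf eta r muf : ℝ) (hbeta : beta ≠ 0) :
    HasDerivAt (fun mu => FF beta gams lams lamf lam mus mu hs hf eta r)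
      (psi beta gams lams lamf lam mus muf hs hf eta r) muf := by
  have h1 := (ff_hasDerivAt beta gams lams lamf lam mus hs hf eta r muf).log
    (ne_of_gt (ff_pos beta gams lams lamf lam mus muf hs hf eta r))
  have h2 := (h1.const_mul beta⁻¹).const_add (-(gams * r))
  have h3 : HasDerivAt (fun mu => FF beta gams lams lamf lam mus mu hs hf eta r) _ muf := h2
  convert h3 using 1
  unfold psi
  field_simp

lemma abs_dff_le (beta gams lams lamf lam mus muf hs hf eta r : ℝ) :
    |dff beta gams lams lamf lam mus muf hs hf eta r|
      ≤ ff beta gams lams lamf lam mus muf hs hf eta r := by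
  have c1 := Real.cosh_pos (x := beta * hs)
  have c2 := Real.cosh_pos (x := beta * (eta + hf))
  have c3 := Real.cosh_pos (x := beta * (eta - hf))
  have c4 := Real.cosh_pos (x := beta * gg gams lams mus r 0)
  have c5 := Real.cosh_pos (x := beta * gg gams lams mus r (4 * lam))
  have c6 := Real.cosh_pos (x := beta * gg gams lams mus r (2 * lam))
  have c7 := Real.cosh_pos (x := beta * hf)
  have p1 := Real.exp_pos (-(beta * muf))
  have p2 := Real.exp_pos (-(beta * (4 * lam + 2 * lamf - muf)))
  have p3 := Real.exp_pos (-(beta * (2 * lam - hs)))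
  have p4 := Real.exp_pos (-(beta * (2 * lam + hs)))
  have p5 := Real.exp_pos (-(beta * (lams + muf)))
  have p6 := Real.exp_pos (-(beta * (4 * lam + lams + 2 * lamf - muf)))
  have p7 := Real.exp_pos (-(beta * (2 * lam + lams)))
  have heq : Real.exp (-(beta * (lams + 4 * lam + 2 * lamf - muf)))
      = Real.exp (-(beta * (4 * lam + lams + 2 * lamf - muf))) := by ring_nf
  rw [abs_le]
  unfold dff ff
  rw [heq]
  constructor <;> nlinarith [mul_pos p3 c2, mul_pos p4 c3, mul_pos (mul_pos p7 c7) c6,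
    mul_pos p1 c1, mul_pos p2 c1, mul_pos p5 c4, mul_pos p6 c5]

lemma abs_psi_le_one (beta gams lams lamf lam mus muf hs hf eta r : ℝ) :
    |psi beta gams lams lamf lam mus muf hs hf eta r| ≤ 1 := by
  have hf' := ff_pos beta gams lams lamf lam mus muf hs hf eta r
  have h := abs_dff_le beta gams lams lamf lam mus muf hs hf eta r
  unfold psi
  rw [abs_mul, abs_inv, abs_of_pos hf']
  rw [inv_mul_le_iff₀ hf']
  simpa using h

lemma ff_continuous (beta gams lams lamf lam mus hs hf eta : ℝ) :
    Continuous (fun p : ℝ × ℝ => ff beta gams lams lamf lam mus p.1 hs hf eta p.2) := by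
  unfold ff gg
  fun_prop

lemma dff_continuous (beta gams lams lamf lam mus hs hf eta : ℝ) :
    Continuous (fun p : ℝ × ℝ => dff beta gams lams lamf lam mus p.1 hs hf eta p.2) := by
  unfold dff gg
  fun_prop

lemma psi_continuous (beta gams lams lamf lam mus hs hf eta : ℝ) :
    Continuous (fun p : ℝ × ℝ => psi beta gams lams lamf lam mus p.1 hs hf eta p.2) := by
  unfold psi
  exact ((ff_continuous beta gams lams lamf lam mus hs hf eta).inv₀
    (fun p => ne_of_gt (ff_pos _ _ _ _ _ _ _ _ _ _ _))).mul
    (dff_continuous beta gams lams lamf lam mus hs hf eta)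

lemma FF_continuous_r (beta gams lams lamf lam mus muf hs hf eta : ℝ) :
    Continuous (fun r => FF beta gams lams lamf lam mus muf hs hf eta r) := by
  unfold FF
  have h1 : Continuous (fun r => ff beta gams lams lamf lam mus muf hs hf eta r) := by
    unfold ff gg; fun_prop
  have h2 := h1.log (fun r => ne_of_gt (ff_pos _ _ _ _ _ _ _ _ _ _ _))
  fun_prop

lemma FF_mvt (beta gams lams lamf lam mus hs hf eta : ℝ) (hbeta : beta ≠ 0) (mu0 mu r : ℝ) :
    ∃ ξ, |ξ - mu0| ≤ |mu - mu0| ∧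
      FF beta gams lams lamf lam mus mu hs hf eta r
        - FF beta gams lams lamf lam mus mu0 hs hf eta r
      = psi beta gams lams lamf lam mus ξ hs hf eta r * (mu - mu0) := by
  rcases lt_trichotomy mu0 mu with hlt | heq | hgt
  · obtain ⟨c, hc, hceq⟩ := exists_hasDerivAt_eq_slope
      (fun m => FF beta gams lams lamf lam mus m hs hf eta r)
      (fun m => psi beta gams lams lamf lam mus m hs hf eta r) hlt
      (fun x _ => (FF_hasDerivAt beta gams lams lamf lam mus hs hf eta r x hbeta).continuousAt.continuousWithinAt)
      (fun x _ => FF_hasDerivAt beta gams lams lamf lam mus hs hf eta r x hbeta)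
    refine ⟨c, ?_, ?_⟩
    · rw [abs_of_pos (by linarith [hc.1] : (0:ℝ) < c - mu0), abs_of_pos (by linarith : (0:ℝ) < mu - mu0)]
      linarith [hc.2]
    · have hne : mu - mu0 ≠ 0 := by intro h; apply absurd h; intro h2; linarith [sub_eq_zero.mp h2]
      rw [hceq, div_mul_cancel₀ _ hne]
  · exact ⟨mu0, by simp [heq], by simp [heq]⟩
  · obtain ⟨c, hc, hceq⟩ := exists_hasDerivAt_eq_slope
      (fun m => FF beta gams lams lamf lam mus m hs hf eta r)
      (fun m => psi beta gams lams lamf lam mus m hs hf eta r) hgt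
      (fun x _ => (FF_hasDerivAt beta gams lams lamf lam mus hs hf eta r x hbeta).continuousAt.continuousWithinAt)
      (fun x _ => FF_hasDerivAt beta gams lams lamf lam mus hs hf eta r x hbeta)
    refine ⟨c, ?_, ?_⟩
    · rw [abs_of_neg (by linarith [hc.2] : c - mu0 < 0), abs_of_neg (by linarith : mu - mu0 < 0)]
      linarith [hc.1]
    · have hne : mu0 - mu ≠ 0 := by intro h; apply absurd h; intro h2; linarith [sub_eq_zero.mp h2]
      rw [hceq]
      field_simp
      ring
  
lemma FF_lip (beta gams lams lamf lam mus hs hf eta : ℝ) (hbeta : beta ≠ 0) (mu0 mu r : ℝ) :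
    |FF beta gams lams lamf lam mus mu hs hf eta r
      - FF beta gams lams lamf lam mus mu0 hs hf eta r| ≤ |mu - mu0| := by
  obtain ⟨ξ, _, heq⟩ := FF_mvt beta gams lams lamf lam mus hs hf eta hbeta mu0 mu r
  rw [heq, abs_mul]
  calc |psi beta gams lams lamf lam mus ξ hs hf eta r| * |mu - mu0|
      ≤ 1 * |mu - mu0| := by
        exact mul_le_mul_of_nonneg_right (abs_psi_le_one _ _ _ _ _ _ _ _ _ _ _) (abs_nonneg _)
    _ = |mu - mu0| := one_mul _

lemma cosh_le_exp_self {t : ℝ} (ht : 0 ≤ t) : Real.cosh t ≤ Real.exp t := by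
  rw [Real.cosh_eq]
  have : Real.exp (-t) ≤ Real.exp t := Real.exp_le_exp.mpr (by linarith)
  linarith

lemma gg_le (gams lams mus r x : ℝ) (hr : 0 ≤ r) (hgams : 0 ≤ gams) :
    gg gams lams mus r x ≤ |x + lams - mus| + gams * Real.sqrt r := by
  unfold gg
  have h1 : (x + lams - mus) ^ 2 + gams ^ 2 * r ≤ (|x + lams - mus| + gams * Real.sqrt r) ^ 2 := by
    have h2 : Real.sqrt r ^ 2 = r := Real.sq_sqrt hr
    have h3 : (0:ℝ) ≤ |x + lams - mus| := abs_nonneg _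
    have h4 : 0 ≤ Real.sqrt r := Real.sqrt_nonneg r
    have h5 : |x + lams - mus| ^ 2 = (x + lams - mus) ^ 2 := sq_abs _
    nlinarith [mul_nonneg (mul_nonneg h3 hgams) h4]
  calc Real.sqrt ((x + lams - mus) ^ 2 + gams ^ 2 * r)
      ≤ Real.sqrt ((|x + lams - mus| + gams * Real.sqrt r) ^ 2) := Real.sqrt_le_sqrt h1
    _ = |x + lams - mus| + gams * Real.sqrt r := Real.sqrt_sq (by positivity)

lemma FF_coercive (beta gams lams lamf lam mus muf hs hf eta : ℝ)
    (hbeta : 0 < beta) (hgams : 0 < gams) :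
    ∃ C : ℝ, ∀ r : ℝ, 0 ≤ r →
      FF beta gams lams lamf lam mus muf hs hf eta r ≤ -(gams * r) / 2 + C := by
  set K : ℝ := (Real.exp (-(beta * muf)) + Real.exp (-(beta * (4 * lam + 2 * lamf - muf))))
      * Real.cosh (beta * hs)
    + Real.exp (-(beta * (2 * lam - hs))) * Real.cosh (beta * (eta + hf))
    + Real.exp (-(beta * (2 * lam + hs))) * Real.cosh (beta * (eta - hf))
    + Real.exp (-(beta * (lams + muf))) * Real.exp (beta * |0 + lams - mus|)
    + Real.exp (-(beta * (4 * lam + lams + 2 * lamf - muf)))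
      * Real.exp (beta * |4 * lam + lams - mus|)
    + 2 * Real.exp (-(beta * (2 * lam + lams))) * Real.cosh (beta * hf)
      * Real.exp (beta * |2 * lam + lams - mus|) with hK
  have hKpos : 0 < K := by
    have c1 := Real.cosh_pos (x := beta * hs)
    have c2 := Real.cosh_pos (x := beta * (eta + hf))
    have c3 := Real.cosh_pos (x := beta * (eta - hf))
    have c7 := Real.cosh_pos (x := beta * hf)
    positivity
  refine ⟨beta⁻¹ * Real.log K + gams / 2, fun r hr => ?_⟩
  set E : ℝ := Real.exp (beta * gams * Real.sqrt r) with hE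
  have hEpos : 0 < E := Real.exp_pos _
  have hE1 : 1 ≤ E := Real.one_le_exp (by positivity)
  have hgbound : ∀ x : ℝ, Real.cosh (beta * gg gams lams mus r x)
      ≤ Real.exp (beta * |x + lams - mus|) * E := by
    intro x
    have hgnn : 0 ≤ gg gams lams mus r x := Real.sqrt_nonneg _
    have h1 : Real.cosh (beta * gg gams lams mus r x) ≤ Real.exp (beta * gg gams lams mus r x) :=
      cosh_le_exp_self (by positivity)
    have h2 : beta * gg gams lams mus r x ≤ beta * (|x + lams - mus| + gams * Real.sqrt r) :=
      mul_le_mul_of_nonneg_left (gg_le gams lams mus r x hr hgams.le) hbeta.le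
    calc Real.cosh (beta * gg gams lams mus r x)
        ≤ Real.exp (beta * (|x + lams - mus| + gams * Real.sqrt r)) :=
          h1.trans (Real.exp_le_exp.mpr h2)
      _ = Real.exp (beta * |x + lams - mus|) * E := by rw [hE, ← Real.exp_add]; ring_nf
  have hffle : ff beta gams lams lamf lam mus muf hs hf eta r ≤ K * E := by
    have c1 := Real.cosh_pos (x := beta * hs)
    have c2 := Real.cosh_pos (x := beta * (eta + hf))
    have c3 := Real.cosh_pos (x := beta * (eta - hf))
    have c7 := Real.cosh_pos (x := beta * hf)
    have p1 := Real.exp_pos (-(beta * muf))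
    have p2 := Real.exp_pos (-(beta * (4 * lam + 2 * lamf - muf)))
    have p3 := Real.exp_pos (-(beta * (2 * lam - hs)))
    have p4 := Real.exp_pos (-(beta * (2 * lam + hs)))
    have p5 := Real.exp_pos (-(beta * (lams + muf)))
    have p6 := Real.exp_pos (-(beta * (4 * lam + lams + 2 * lamf - muf)))
    have p7 := Real.exp_pos (-(beta * (2 * lam + lams)))
    have h0 := hgbound 0
    have h4l := hgbound (4 * lam)
    have h2l := hgbound (2 * lam)
    unfold ff
    rw [hK]
    nlinarith [mul_le_mul_of_nonneg_left h0 p5.le,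
      mul_le_mul_of_nonneg_left h4l p6.le,
      mul_le_mul_of_nonneg_left h2l (by positivity :
        (0:ℝ) ≤ 2 * Real.exp (-(beta * (2 * lam + lams))) * Real.cosh (beta * hf)),
      mul_pos p1 c1, mul_pos p2 c1, mul_pos p3 c2, mul_pos p4 c3]
  have hlog : Real.log (ff beta gams lams lamf lam mus muf hs hf eta r)
      ≤ Real.log K + beta * gams * Real.sqrt r := by
    calc Real.log (ff beta gams lams lamf lam mus muf hs hf eta r)
        ≤ Real.log (K * E) :=
          Real.log_le_log (ff_pos _ _ _ _ _ _ _ _ _ _ _) hffle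
      _ = Real.log K + beta * gams * Real.sqrt r := by
          rw [Real.log_mul (ne_of_gt hKpos) (ne_of_gt hEpos), hE, Real.log_exp]
  have hsq : Real.sqrt r ≤ (r + 1) / 2 := by
    nlinarith [Real.sq_sqrt hr, Real.sqrt_nonneg r, sq_nonneg (Real.sqrt r - 1)]
  have hbi : 0 < beta⁻¹ := by positivity
  unfold FF
  have := mul_le_mul_of_nonneg_left hlog hbi.le
  have h2 : beta⁻¹ * (beta * gams * Real.sqrt r) = gams * Real.sqrt r := by
    field_simp
  nlinarith [mul_le_mul_of_nonneg_left hsq hgams.le]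

/-- density of the non-superconducting band: if `F` has a unique
maximizer `rb` over `[0,∞)`, then `μ ↦ p(μ)` (varying `μ_f`) is differentiable at
`μ_f` with derivative `d⁽ᶠ⁾`. -/
theorem pressure_deriv_muf (beta gams lams lamf lam mus muf hs hf eta : ℝ) (hbeta : 0 < beta) (hgams : 0 < gams) (hlams : 0 ≤ lams) (hlamf : 0 ≤ lamf) (hlam : 0 ≤ lam)
    (rb : ℝ) (hrb : 0 ≤ rb) (hmax : ∀ r' : ℝ, 0 ≤ r' → FF beta gams lams lamf lam mus muf hs hf eta r' ≤ FF beta gams lams lamf lam mus muf hs hf eta rb)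
    (huniq : ∀ r : ℝ, 0 ≤ r → (∀ r' : ℝ, 0 ≤ r' → FF beta gams lams lamf lam mus muf hs hf eta r' ≤ FF beta gams lams lamf lam mus muf hs hf eta r) → r = rb) :
    HasDerivAt (fun mu => pp beta gams lams lamf lam mus mu hs hf eta)
      (1 + (ff beta gams lams lamf lam mus muf hs hf eta rb)⁻¹ *
        ((Real.exp (-(beta * (4 * lam + 2 * lamf - muf))) - Real.exp (-(beta * muf)))
            * Real.cosh (beta * hs)
          + Real.exp (-(beta * (lams + 4 * lam + 2 * lamf - muf)))
            * Real.cosh (beta * gg gams lams mus rb (4 * lam))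
          - Real.exp (-(beta * (lams + muf)))
            * Real.cosh (beta * gg gams lams mus rb 0))) muf := by
  have hbne : beta ≠ 0 := ne_of_gt hbeta
  set D := psi beta gams lams lamf lam mus muf hs hf eta rb with hDdef
  set M := FF beta gams lams lamf lam mus muf hs hf eta rb with hMdef
  -- the sup at muf equals M
  have hPmuf : sSup ((fun r => FF beta gams lams lamf lam mus muf hs hf eta r) '' Set.Ici 0)
      = M := by
    apply IsGreatest.csSup_eq
    constructor
    · exact ⟨rb, hrb, rfl⟩
    · rintro x ⟨r, hr, rfl⟩
      exact hmax r hr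
  have key : HasDerivAt
      (fun mu => sSup ((fun r => FF beta gams lams lamf lam mus mu hs hf eta r) '' Set.Ici 0))
      D muf := by
    rw [hasDerivAt_iff_isLittleO, Asymptotics.isLittleO_iff]
    intro c hc
    -- coercivity radius R
    obtain ⟨C, hC⟩ := FF_coercive beta gams lams lamf lam mus muf hs hf eta hbeta hgams
    set R := max rb (2 * (C + 2 - M) / gams) with hRdef
    have hRb : rb ≤ R := le_max_left _ _
    have hR0 : (0:ℝ) ≤ R := le_trans hrb hRb
    have hRco : ∀ r : ℝ, R ≤ r →
        FF beta gams lams lamf lam mus muf hs hf eta r ≤ M - 2 := by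
      intro r hrR
      have hr0 : 0 ≤ r := le_trans hR0 hrR
      have h1 := hC r hr0
      have h2 : 2 * (C + 2 - M) / gams ≤ r := le_trans (le_max_right _ _) hrR
      have h3 : 2 * (C + 2 - M) ≤ gams * r := by
        rw [div_le_iff₀ hgams] at h2
        linarith
      linarith
    -- continuity of psi at (muf, rb)
    have hcont := (psi_continuous beta gams lams lamf lam mus hs hf eta).continuousAt
      (x := (muf, rb))
    rw [Metric.continuousAt_iff] at hcont
    obtain ⟨d1, hd1, hball⟩ := hcont c hc
    set ρ := d1 / 2 with hρdef
    have hρpos : 0 < ρ := by positivity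
    -- separation constant m
    have hKey : ∃ m : ℝ, m < M ∧ ∀ r : ℝ, r ∈ Set.Icc (0:ℝ) R → ρ ≤ |r - rb| →
        FF beta gams lams lamf lam mus muf hs hf eta r ≤ m := by
      set Kset := Set.Icc (0:ℝ) R ∩ {r : ℝ | ρ ≤ |r - rb|} with hKset
      have hclosed : IsClosed {r : ℝ | ρ ≤ |r - rb|} :=
        isClosed_le continuous_const ((continuous_id.sub continuous_const).abs)
      have hcomp : IsCompact Kset := (isCompact_Icc).inter_right hclosed
      by_cases hne : Kset.Nonempty
      · obtain ⟨r', hr'K, hr'max⟩ := hcomp.exists_isMaxOn hne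
          (FF_continuous_r beta gams lams lamf lam mus muf hs hf eta).continuousOn
        refine ⟨FF beta gams lams lamf lam mus muf hs hf eta r', ?_, ?_⟩
        · have hle := hmax r' hr'K.1.1
          rcases lt_or_eq_of_le hle with h | h
          · exact h
          · exfalso
            have hglob : ∀ r'' : ℝ, 0 ≤ r'' →
                FF beta gams lams lamf lam mus muf hs hf eta r''
                  ≤ FF beta gams lams lamf lam mus muf hs hf eta r' := by
              intro r'' hr''
              rw [h]
              exact hmax r'' hr''
            have := huniq r' hr'K.1.1 hglob
            have h2 := hr'K.2
            rw [this] at h2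
            simp at h2
            linarith
        · intro r hrIcc hrρ
          exact hr'max ⟨hrIcc, hrρ⟩
      · refine ⟨M - 1, by linarith, ?_⟩
        intro r hrIcc hrρ
        exfalso
        exact hne ⟨r, hrIcc, hrρ⟩
    obtain ⟨m, hmM, hmprop⟩ := hKey
    set δ := min (min 1 (d1 / 2)) ((M - m) / 3) with hδdef
    have hδpos : 0 < δ := by
      apply lt_min (lt_min one_pos (by positivity))
      linarith
    have hδ1 : δ ≤ 1 := le_trans (min_le_left _ _) (min_le_left _ _)
    have hδd1 : δ ≤ d1 / 2 := le_trans (min_le_left _ _) (min_le_right _ _)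
    have hδm : δ ≤ (M - m) / 3 := min_le_right _ _
    rw [Metric.eventually_nhds_iff]
    refine ⟨δ, hδpos, ?_⟩
    intro mu hmu
    rw [Real.dist_eq] at hmu
    -- maximizer r1 for mu on [0, R]
    obtain ⟨r1, hr1Icc, hr1max⟩ := (isCompact_Icc (a := (0:ℝ)) (b := R)).exists_isMaxOn
      ⟨rb, hrb, hRb⟩ (FF_continuous_r beta gams lams lamf lam mus mu hs hf eta).continuousOn
    have hrb_mem : rb ∈ Set.Icc (0:ℝ) R := ⟨hrb, hRb⟩
    have hlip : ∀ r : ℝ, |FF beta gams lams lamf lam mus mu hs hf eta r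
        - FF beta gams lams lamf lam mus muf hs hf eta r| ≤ |mu - muf| :=
      fun r => FF_lip beta gams lams lamf lam mus hs hf eta hbne muf mu r
    -- r1 is a global maximizer over [0,∞)
    have hglobal : ∀ r : ℝ, 0 ≤ r → FF beta gams lams lamf lam mus mu hs hf eta r
        ≤ FF beta gams lams lamf lam mus mu hs hf eta r1 := by
      intro r hr
      rcases le_or_gt r R with hrR | hrR
      · exact hr1max ⟨hr, hrR⟩
      · have h1 : FF beta gams lams lamf lam mus mu hs hf eta r
            ≤ FF beta gams lams lamf lam mus muf hs hf eta r + |mu - muf| := by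
          have := hlip r
          have := abs_le.mp this
          linarith [this.2]
        have h2 := hRco r hrR.le
        have h3 : FF beta gams lams lamf lam mus mu hs hf eta rb
            ≥ M - |mu - muf| := by
          have := abs_le.mp (hlip rb)
          rw [← hMdef] at this
          linarith [this.1]
        have h4 : FF beta gams lams lamf lam mus mu hs hf eta rb
            ≤ FF beta gams lams lamf lam mus mu hs hf eta r1 := hr1max hrb_mem
        have : |mu - muf| ≤ 1 := le_trans hmu.le hδ1
        calc FF beta gams lams lamf lam mus mu hs hf eta r
            ≤ M - 2 + |mu - muf| := by linarith
          _ ≤ M - |mu - muf| := by linarith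
          _ ≤ FF beta gams lams lamf lam mus mu hs hf eta rb := h3
          _ ≤ FF beta gams lams lamf lam mus mu hs hf eta r1 := h4
    have hPmu : sSup ((fun r => FF beta gams lams lamf lam mus mu hs hf eta r) '' Set.Ici 0)
        = FF beta gams lams lamf lam mus mu hs hf eta r1 := by
      apply IsGreatest.csSup_eq
      constructor
      · exact ⟨r1, hr1Icc.1, rfl⟩
      · rintro x ⟨r, hr, rfl⟩
        exact hglobal r hr
    -- r1 is close to rb
    have hr1close : |r1 - rb| < ρ := by
      by_contra hcon
      push_neg at hcon
      have h1 := hmprop r1 hr1Icc hcon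
      have h2 : FF beta gams lams lamf lam mus mu hs hf eta r1 ≤ m + |mu - muf| := by
        have := abs_le.mp (hlip r1)
        linarith [this.2]
      have h3 : FF beta gams lams lamf lam mus mu hs hf eta rb ≥ M - |mu - muf| := by
        have := abs_le.mp (hlip rb)
        rw [← hMdef] at this
        linarith [this.1]
      have h4 : FF beta gams lams lamf lam mus mu hs hf eta rb
          ≤ FF beta gams lams lamf lam mus mu hs hf eta r1 := hr1max hrb_mem
      have h5 : |mu - muf| ≤ (M - m) / 3 := le_trans hmu.le hδm
      have : FF beta gams lams lamf lam mus mu hs hf eta r1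
          < FF beta gams lams lamf lam mus mu hs hf eta rb := by
        calc FF beta gams lams lamf lam mus mu hs hf eta r1
            ≤ m + |mu - muf| := h2
          _ < M - |mu - muf| := by linarith
          _ ≤ FF beta gams lams lamf lam mus mu hs hf eta rb := h3
      linarith [h4, this]
    -- MVT at r1 (upper bound)
    obtain ⟨ξ, hξ, hξeq⟩ := FF_mvt beta gams lams lamf lam mus hs hf eta hbne muf mu r1
    obtain ⟨ξ', hξ', hξ'eq⟩ := FF_mvt beta gams lams lamf lam mus hs hf eta hbne muf mu rb
    have hψ1 : |psi beta gams lams lamf lam mus ξ hs hf eta r1 - D| < c := by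
      have hd : dist ((ξ, r1) : ℝ × ℝ) ((muf, rb) : ℝ × ℝ) < d1 := by
        rw [Prod.dist_eq]
        simp only [Real.dist_eq]
        apply max_lt
        · exact lt_of_le_of_lt hξ (lt_of_lt_of_le hmu (by linarith))
        · exact lt_of_lt_of_le hr1close (by rw [hρdef]; linarith)
      have := hball hd
      rw [Real.dist_eq] at this
      exact this
    have hψ2 : |psi beta gams lams lamf lam mus ξ' hs hf eta rb - D| < c := by
      have hd : dist ((ξ', rb) : ℝ × ℝ) ((muf, rb) : ℝ × ℝ) < d1 := by
        rw [Prod.dist_eq]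
        simp only [Real.dist_eq]
        apply max_lt
        · exact lt_of_le_of_lt hξ' (lt_of_lt_of_le hmu (by linarith))
        · simpa using hd1
      have := hball hd
      rw [Real.dist_eq] at this
      exact this
    -- upper and lower bounds on the sup increment
    have hupper : sSup ((fun r => FF beta gams lams lamf lam mus mu hs hf eta r) '' Set.Ici 0)
        - M ≤ psi beta gams lams lamf lam mus ξ hs hf eta r1 * (mu - muf) := by
      rw [hPmu]
      have h1 : FF beta gams lams lamf lam mus muf hs hf eta r1 ≤ M := hmax r1 hr1Icc.1
      linarith [hξeq]
    have hlower : psi beta gams lams lamf lam mus ξ' hs hf eta rb * (mu - muf)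
        ≤ sSup ((fun r => FF beta gams lams lamf lam mus mu hs hf eta r) '' Set.Ici 0) - M := by
      rw [hPmu]
      have h1 : FF beta gams lams lamf lam mus mu hs hf eta rb
          ≤ FF beta gams lams lamf lam mus mu hs hf eta r1 := hr1max hrb_mem
      rw [← hMdef] at hξ'eq
      linarith [hξ'eq]
    -- conclude
    simp only [smul_eq_mul, Real.norm_eq_abs]
    rw [hPmuf, abs_le]
    constructor
    · have h1 : -(c * |mu - muf|) ≤ (psi beta gams lams lamf lam mus ξ' hs hf eta rb - D)
          * (mu - muf) := by
        have := neg_abs_le ((psi beta gams lams lamf lam mus ξ' hs hf eta rb - D) * (mu - muf))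
        have h2 : |(psi beta gams lams lamf lam mus ξ' hs hf eta rb - D) * (mu - muf)|
            ≤ c * |mu - muf| := by
          rw [abs_mul]
          exact mul_le_mul_of_nonneg_right hψ2.le (abs_nonneg _)
        linarith
      nlinarith [hlower]
    · have h2 : (psi beta gams lams lamf lam mus ξ hs hf eta r1 - D) * (mu - muf)
          ≤ c * |mu - muf| := by
        calc (psi beta gams lams lamf lam mus ξ hs hf eta r1 - D) * (mu - muf)
            ≤ |(psi beta gams lams lamf lam mus ξ hs hf eta r1 - D) * (mu - muf)| := le_abs_self _
          _ ≤ c * |mu - muf| := by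
              rw [abs_mul]
              exact mul_le_mul_of_nonneg_right hψ1.le (abs_nonneg _)
      nlinarith [hupper]
  have h1 : HasDerivAt (fun mu : ℝ => beta⁻¹ * Real.log 2 + mus + mu) 1 muf := by
    simpa using (hasDerivAt_id muf).const_add (beta⁻¹ * Real.log 2 + mus)
  have h2 := h1.add key
  have h3 : HasDerivAt (fun mu => pp beta gams lams lamf lam mus mu hs hf eta) (1 + D) muf := h2
  exact h3
end
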